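/- Let Q ∈ 𝒬_n, fix k < l, and define y⁻ := min{0, min{ŷ_{00}, ŷ_{01}, ŷ_{10}} − y̌_{11}} and y⁺ := max{0, min{y̌_{00}, y̌_{01}, y̌_{10}} − ŷ_{11}}. Then for every w ∈ ℝ with y⁻ ≤ w ≤ y⁺, an optimum is preserved under the update Q_{kl} ↦ Q_{kl} + w: there exists x ∈ S*(Q) with x ∈ S*(Q + w·e_k e_lᵀ), i.e., S*(Q) ∩ S*(Q + w·e_k e_lᵀ) ≠ ∅. -/

import Mathlib

open scoped BigOperators

/-- Real-valued version of a binary vector. -/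
def toR {n : ℕ} (x : Fin n → Bool) : Fin n → ℝ := fun i => if x i then 1 else 0

/-- QUBO energy f_Q(x) = xᵀQx (for upper-triangular Q this is Σ_{i≤j} Q i j * x i * x j). -/
def energy {n : ℕ} (Q : Matrix (Fin n) (Fin n) ℝ) (x : Fin n → Bool) : ℝ :=
  ∑ i, ∑ j, Q i j * toR x i * toR x j

/-- Upper-triangular predicate: entries below the diagonal vanish. -/
def IsUpperTri {n : ℕ} (Q : Matrix (Fin n) (Fin n) ℝ) : Prop :=
  ∀ i j : Fin n, j < i → Q i j = 0

/-- S*(Q): the set of minimizing binary vectors. -/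
def minimizers {n : ℕ} (Q : Matrix (Fin n) (Fin n) ℝ) : Set (Fin n → Bool) :=
  {x | ∀ y : Fin n → Bool, energy Q x ≤ energy Q y}

/-- y*_{ab}: the minimum of f_Q over the subspace {x : x_k = a, x_l = b}. -/
noncomputable def subOpt {n : ℕ} (Q : Matrix (Fin n) (Fin n) ℝ) (k l : Fin n)
    (a b : Bool) : ℝ :=
  sInf (energy Q '' {x : Fin n → Bool | x k = a ∧ x l = b})

lemma energy_add_std {n : ℕ} (Q : Matrix (Fin n) (Fin n) ℝ) (k l : Fin n) (w : ℝ)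
    (x : Fin n → Bool) :
    energy (Q + Matrix.single k l w) x = energy Q x + w * toR x k * toR x l := by
  unfold energy
  have h : ∀ i j : Fin n, (Q + Matrix.single k l w) i j * toR x i * toR x j
      = Q i j * toR x i * toR x j + (if i = k ∧ j = l then w * toR x k * toR x l else 0) := by
    intro i j
    by_cases hik : i = k <;> by_cases hjl : j = l <;>
      simp [Matrix.add_apply, Matrix.single, hik, hjl, add_mul] <;>
      intros <;> simp_all
  simp only [h, Finset.sum_add_distrib, ite_and]
  congr 1
  simp [Finset.sum_ite_eq']

lemma block_nonempty {n : ℕ} (k l : Fin n) (hkl : k ≠ l) (a b : Bool) :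
    ∃ x : Fin n → Bool, x k = a ∧ x l = b := by
  refine ⟨fun i => if i = k then a else if i = l then b else false, ?_, ?_⟩
  · simp
  · simp [hkl.symm]

lemma subOpt_le {n : ℕ} (Q : Matrix (Fin n) (Fin n) ℝ) (k l : Fin n)
    (x : Fin n → Bool) : subOpt Q k l (x k) (x l) ≤ energy Q x := by
  apply csInf_le ((Set.toFinite _).bddBelow)
  exact ⟨x, ⟨rfl, rfl⟩, rfl⟩

lemma subOpt_attained {n : ℕ} (Q : Matrix (Fin n) (Fin n) ℝ) (k l : Fin n)
    (hkl : k ≠ l) (a b : Bool) :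
    ∃ x : Fin n → Bool, x k = a ∧ x l = b ∧ energy Q x = subOpt Q k l a b := by
  obtain ⟨x0, h1, h2⟩ := block_nonempty k l hkl a b
  have hne : (energy Q '' {x : Fin n → Bool | x k = a ∧ x l = b}).Nonempty :=
    ⟨energy Q x0, x0, ⟨h1, h2⟩, rfl⟩
  obtain ⟨x, hx, hex⟩ := hne.csInf_mem (Set.toFinite _)
  exact ⟨x, hx.1, hx.2, hex⟩

/-- Optimum preservation under a single off-diagonal parameter update
Q_{kl} ↦ Q_{kl} + w, whenever y⁻ ≤ w ≤ y⁺ with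
y⁻ = min{0, min{ŷ₀₀, ŷ₀₁, ŷ₁₀} − y̌₁₁} and y⁺ = max{0, min{y̌₀₀, y̌₀₁, y̌₁₀} − ŷ₁₁}. -/
theorem update_preserves_optimum (n : ℕ) (hn : 2 ≤ n)
    (Q : Matrix (Fin n) (Fin n) ℝ) (hQ : IsUpperTri Q)
    (k l : Fin n) (hkl : k < l)
    (ylo yhi : Bool → Bool → ℝ)
    (hbounds : ∀ a b : Bool, ylo a b ≤ subOpt Q k l a b ∧ subOpt Q k l a b ≤ yhi a b)
    (w : ℝ)
    (hw_lo : min 0 (min (yhi false false) (min (yhi false true) (yhi true false))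
        - ylo true true) ≤ w)
    (hw_hi : w ≤ max 0 (min (ylo false false) (min (ylo false true) (ylo true false))
        - yhi true true)) :
    (minimizers Q ∩ minimizers (Q + Matrix.single k l w)).Nonempty := by
  have hkl' : k ≠ l := ne_of_lt hkl
  have hE := energy_add_std Q k l w
  have hle : ∀ x : Fin n → Bool, subOpt Q k l (x k) (x l) ≤ energy Q x := subOpt_le Q k l
  rcases lt_trichotomy w 0 with hneg | hz | hpos
  · -- w < 0
    have hm : min (yhi false false) (min (yhi false true) (yhi true false))
        - ylo true true ≤ w := by
      rcases min_le_iff.mp hw_lo with h | h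
      · linarith
      · exact h
    have hex : ∃ a0 b0 : Bool, ¬(a0 = true ∧ b0 = true) ∧ subOpt Q k l a0 b0 =
        min (subOpt Q k l false false)
          (min (subOpt Q k l false true) (subOpt Q k l true false)) := by
      rcases le_total (subOpt Q k l false false)
          (min (subOpt Q k l false true) (subOpt Q k l true false)) with h | h
      · exact ⟨false, false, by simp, (min_eq_left h).symm⟩
      · rcases le_total (subOpt Q k l false true) (subOpt Q k l true false) with h2 | h2
        · exact ⟨false, true, by simp, by rw [min_eq_right h, min_eq_left h2]⟩
        · exact ⟨true, false, by simp, by rw [min_eq_right h, min_eq_right h2]⟩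
    obtain ⟨a0, b0, hab, hmin⟩ := hex
    obtain ⟨x, hxk, hxl, hxE⟩ := subOpt_attained Q k l hkl' a0 b0
    have h1 : subOpt Q k l a0 b0 ≤ subOpt Q k l false false := hmin ▸ min_le_left _ _
    have h2 : subOpt Q k l a0 b0 ≤ subOpt Q k l false true :=
      hmin ▸ le_trans (min_le_right _ _) (min_le_left _ _)
    have h3 : subOpt Q k l a0 b0 ≤ subOpt Q k l true false :=
      hmin ▸ le_trans (min_le_right _ _) (min_le_right _ _)
    have hmY : subOpt Q k l a0 b0 ≤ min (yhi false false)
        (min (yhi false true) (yhi true false)) :=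
      le_min (h1.trans (hbounds false false).2)
        (le_min (h2.trans (hbounds false true).2) (h3.trans (hbounds true false).2))
    have hterm : w * toR x k * toR x l = 0 := by
      cases a0 <;> cases b0 <;> simp [toR, hxk, hxl] <;> exact absurd ⟨rfl, rfl⟩ hab
    have hbtt := hbounds true true
    refine ⟨x, ?_, ?_⟩
    · intro y
      have hy := hle y
      rw [hxE]
      cases hyk : y k <;> cases hyl : y l <;> rw [hyk, hyl] at hy <;> linarith
    · intro y
      rw [hE x, hE y, hterm, hxE]
      have hy := hle y
      cases hyk : y k <;> cases hyl : y l <;> rw [hyk, hyl] at hy <;>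
        simp [toR, hyk, hyl] <;> linarith
  · -- w = 0
    subst hz
    obtain ⟨x, hx⟩ := Finite.exists_min (energy Q)
    refine ⟨x, hx, ?_⟩
    intro y
    rw [hE x, hE y]
    simp only [zero_mul, add_zero]
    exact hx y
  · -- w > 0
    have hM : w ≤ min (ylo false false) (min (ylo false true) (ylo true false))
        - yhi true true := by
      rcases le_max_iff.mp hw_hi with h | h
      · linarith
      · exact h
    obtain ⟨x, hxk, hxl, hxE⟩ := subOpt_attained Q k l hkl' true true
    have h1 : min (ylo false false) (min (ylo false true) (ylo true false))
        ≤ ylo false false := min_le_left _ _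
    have h2 : min (ylo false false) (min (ylo false true) (ylo true false))
        ≤ ylo false true := le_trans (min_le_right _ _) (min_le_left _ _)
    have h3 : min (ylo false false) (min (ylo false true) (ylo true false))
        ≤ ylo true false := le_trans (min_le_right _ _) (min_le_right _ _)
    have hbtt := hbounds true true
    have hbff := hbounds false false
    have hbft := hbounds false true
    have hbtf := hbounds true false
    refine ⟨x, ?_, ?_⟩
    · intro y
      have hy := hle y
      rw [hxE]
      cases hyk : y k <;> cases hyl : y l <;> rw [hyk, hyl] at hy <;> linarith
    · intro y
      rw [hE x, hE y, hxE]
      have hy := hle y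
      cases hyk : y k <;> cases hyl : y l <;> rw [hyk, hyl] at hy <;>
        simp [toR, hyk, hyl, hxk, hxl] <;> linarith
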